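/- A cycle of p segments t_1, ..., t_p in which consecutive segments cross (indices mod p) and each t_i has length α + 2β with its two crossing points at distance β from each endpoint admits exactly two ink-maximal PEDs with full ink value: one where each t_i places its (infinitesimal) gap at its crossing with t_{i+1}, and one where each t_i places its gap at its crossing with t_{i−1}. -/
import Mathlib


/-- the MaxPED variable gadget.  A cycle of `p` segments `t_1, …, t_p`
(indices mod `p`) in which consecutive segments cross; each `t i` has length `α + 2β`,
crossing `t (i-1)` at distance `β` from its left endpoint and `t (i+1)` at distance `β`
from its right endpoint (i.e. at position `α + β`).  A full-ink PED of the cycle draws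
each segment entirely except for one (infinitesimal) gap at an interior point `g i`; it is
crossing-free iff for every crossing at least one of the two involved segments places its
gap at the crossing point.  The cycle admits exactly two such ink-maximal PEDs: one where
every segment places its gap at its crossing with its successor (position `α + β`), and
one where every segment places its gap at its crossing with its predecessor
(position `β`). -/
theorem stmt_15 (p : ℕ) (hp : 3 ≤ p) [NeZero p] (α β : ℝ) (hα : 0 < α) (hβ : 0 < β)
    (valid : (ZMod p → ℝ) → Prop)
    (hvalid : ∀ g, valid g ↔
      (∀ i, 0 < g i ∧ g i < α + 2 * β) ∧
      ∀ i : ZMod p, g i = α + β ∨ g (i + 1) = β) :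
    {g | valid g} =
      {fun _ => α + β, fun _ => β} := by
  ext g
  simp only [Set.mem_setOf_eq, Set.mem_insert_iff, Set.mem_singleton_iff, hvalid]
  constructor
  · rintro ⟨_, hcross⟩
    by_cases hall : ∀ i, g i = α + β
    · left; funext i; exact hall i
    · right
      push_neg at hall
      obtain ⟨i, hi⟩ := hall
      have hstep : ∀ j, g j = β → g (j + 1) = β := by
        intro j hj
        rcases hcross j with h | h
        · exfalso; rw [hj] at h; linarith
        · exact h
      have hbase : g (i + 1) = β := (hcross i).resolve_left hi
      have hn : ∀ n : ℕ, g (i + 1 + n) = β := by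
        intro n
        induction n with
        | zero => simpa using hbase
        | succ k ih =>
            have h2 := hstep _ ih
            convert h2 using 2
            push_cast
            ring
      funext k
      have : k = i + 1 + ((k - (i + 1)).val : ZMod p) := by
        simp [ZMod.natCast_val, ZMod.cast_id]
      rw [this]
      exact hn _
  · rintro (rfl | rfl)
    · exact ⟨fun i => ⟨show (0:ℝ) < α + β by positivity, show α + β < α + 2 * β by linarith⟩, fun i => Or.inl rfl⟩
    · exact ⟨fun i => ⟨hβ, show β < α + 2 * β by linarith⟩, fun i => Or.inr rfl⟩
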